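/- Let p₀ > 0, q₀ ∈ (0,1), and T > 0. Suppose g : [0,T] × (−q₀, q₀) → ℝ satisfies: g(0,x) = −p₀e^{−q₀}(e^{x} + e^{−x}) for every x ∈ (−q₀, q₀) (the initial slope of the peakon–antipeakon profile), and for every x ∈ (−q₀, q₀) the map t ↦ g(t,x) is differentiable on [0,T] with ∂ₜg(t,x) ≤ −(3/2)(g(t,x) + p₀q₀)² for all t ∈ [0,T]. Then T ≤ (2/3) · 1/( p₀ (1 + e^{−2q₀} − q₀) ). -/

import Mathlib

open Real Set

/-- Riccati comparison: if `h' ≤ -(3/2) h²` on `[0,T]` and `h 0 = -c < 0`,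
then `T < 2/(3c)`. -/
lemma riccati_blowup (T c : ℝ) (hT : 0 < T) (hc : 0 < c) (h : ℝ → ℝ)
    (hdiff : DifferentiableOn ℝ h (Icc 0 T)) (h0 : h 0 = -c)
    (hineq : ∀ t ∈ Icc (0 : ℝ) T, derivWithin h (Icc 0 T) t ≤ -(3 / 2) * (h t) ^ 2) :
    T < 2 / (3 * c) := by
  have hmemT : (T : ℝ) ∈ Icc (0 : ℝ) T := ⟨le_of_lt hT, le_refl T⟩
  have hmem0 : (0 : ℝ) ∈ Icc (0 : ℝ) T := ⟨le_refl 0, le_of_lt hT⟩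
  have hint : interior (Icc (0 : ℝ) T) = Ioo 0 T := interior_Icc
  -- at interior points, deriv = derivWithin
  have hda : ∀ t ∈ Ioo (0 : ℝ) T, DifferentiableAt ℝ h t := by
    intro t ht
    exact (hdiff t (Ioo_subset_Icc_self ht)).differentiableAt (Icc_mem_nhds ht.1 ht.2)
  have hderiv_eq : ∀ t ∈ Ioo (0 : ℝ) T, deriv h t = derivWithin h (Icc 0 T) t := by
    intro t ht
    exact ((hda t ht).derivWithin (uniqueDiffOn_Icc hT t (Ioo_subset_Icc_self ht))).symm
  have hderiv_le : ∀ t ∈ Ioo (0 : ℝ) T, deriv h t ≤ -(3 / 2) * (h t) ^ 2 := by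
    intro t ht
    rw [hderiv_eq t ht]
    exact hineq t (Ioo_subset_Icc_self ht)
  -- h is antitone on [0,T]
  have hanti : AntitoneOn h (Icc 0 T) := by
    apply antitoneOn_of_deriv_nonpos (convex_Icc 0 T) hdiff.continuousOn
    · rw [hint]; exact hdiff.mono Ioo_subset_Icc_self
    · intro t ht
      rw [hint] at ht
      have := hderiv_le t ht
      nlinarith [sq_nonneg (h t)]
  have hneg : ∀ t ∈ Icc (0 : ℝ) T, h t ≤ -c := by
    intro t ht
    calc h t ≤ h 0 := hanti hmem0 ht ht.1
    _ = -c := h0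
  have hne : ∀ t ∈ Icc (0 : ℝ) T, h t ≠ 0 := by
    intro t ht
    have := hneg t ht
    intro hzero; rw [hzero] at this; linarith
  -- φ t = -(h t)⁻¹ + (3/2) t is antitone
  set φ : ℝ → ℝ := fun t => -(h t)⁻¹ + (3 / 2) * t with hφ
  have hφanti : AntitoneOn φ (Icc 0 T) := by
    apply antitoneOn_of_deriv_nonpos (convex_Icc 0 T)
    · exact ((hdiff.continuousOn.inv₀ hne).neg).add (continuousOn_const.mul continuousOn_id)
    · rw [hint]
      intro t ht
      exact (((((hda t ht).inv (hne t (Ioo_subset_Icc_self ht))).neg).add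
        ((hasDerivAt_id t).const_mul (3 / 2)).differentiableAt)).differentiableWithinAt
    · rw [hint]
      intro t ht
      have hne' : h t ≠ 0 := hne t (Ioo_subset_Icc_self ht)
      have hd : HasDerivAt φ (deriv h t / (h t) ^ 2 + 3 / 2 * 1) t := by
        exact ((((hda t ht).hasDerivAt.inv hne').neg).add
          ((hasDerivAt_id t).const_mul (3 / 2))).congr_deriv (by ring)
      rw [hd.deriv]
      have hle := hderiv_le t ht
      have hsq : (0 : ℝ) < (h t) ^ 2 := by positivity
      rw [mul_one]
      have : deriv h t / (h t) ^ 2 ≤ -(3 / 2) := by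
        rw [div_le_iff₀ hsq]
        nlinarith
      linarith
  have hfin : φ T ≤ φ 0 := hφanti hmem0 hmemT (le_of_lt hT)
  have hφ0 : φ 0 = 1 / c := by
    simp only [hφ, h0, mul_zero, add_zero, neg_neg, one_div, inv_neg]
  have hhT : h T ≤ -c := hneg T hmemT
  have hinvpos : 0 < -(h T)⁻¹ := by
    rw [neg_pos]
    exact inv_lt_zero.mpr (by linarith)
  have : (3 / 2 : ℝ) * T < 1 / c := by
    have : φ T = -(h T)⁻¹ + (3 / 2) * T := rfl
    rw [hφ0] at hfin
    linarith [hfin, hinvpos]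
  rw [lt_div_iff₀ (by positivity : (0:ℝ) < 3 * c)]
  rw [lt_div_iff₀ hc] at this
  nlinarith

theorem lifespan_upper_bound (p₀ q₀ T : ℝ) (hp₀ : 0 < p₀) (hq₀ : q₀ ∈ Ioo (0 : ℝ) 1)
    (hT : 0 < T) (g : ℝ → ℝ → ℝ)
    (h0 : ∀ x ∈ Ioo (-q₀) q₀,
      g 0 x = -(p₀ * Real.exp (-q₀) * (Real.exp x + Real.exp (-x))))
    (hdiff : ∀ x ∈ Ioo (-q₀) q₀, DifferentiableOn ℝ (fun t : ℝ => g t x) (Icc 0 T))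
    (hineq : ∀ x ∈ Ioo (-q₀) q₀, ∀ t ∈ Icc (0 : ℝ) T,
      derivWithin (fun s : ℝ => g s x) (Icc 0 T) t ≤
        -(3 / 2) * (g t x + p₀ * q₀) ^ 2) :
    T ≤ (2 / 3) * (1 / (p₀ * (1 + Real.exp (-2 * q₀) - q₀))) := by
  obtain ⟨hq₀0, hq₀1⟩ := hq₀
  have hA : 0 < 1 + Real.exp (-2 * q₀) - q₀ := by
    have := Real.exp_pos (-2 * q₀); linarith
  by_contra hcon
  push_neg at hcon
  -- the function c x := p₀ (e^{-q₀}(e^x + e^{-x}) - q₀) tends to p₀ A as x → q₀⁻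
  set c : ℝ → ℝ := fun x => p₀ * (Real.exp (-q₀) * (Real.exp x + Real.exp (-x)) - q₀) with hc
  have hlim : Filter.Tendsto c (nhdsWithin q₀ (Ioo (-q₀) q₀))
      (nhds (p₀ * (1 + Real.exp (-2 * q₀) - q₀))) := by
    have hcont : Continuous c := by
      continuity
    have := hcont.tendsto q₀
    have heq : c q₀ = p₀ * (1 + Real.exp (-2 * q₀) - q₀) := by
      simp only [hc]
      have h1 : (-q₀ : ℝ) + q₀ = 0 := by ring
      have h2 : (-q₀ : ℝ) + -q₀ = -2 * q₀ := by ring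
      rw [mul_add, ← Real.exp_add, ← Real.exp_add, h1, h2, Real.exp_zero]
    rw [heq] at this
    exact this.mono_left nhdsWithin_le_nhds
  have hnebot : (nhdsWithin q₀ (Ioo (-q₀) q₀)).NeBot := by
    apply mem_closure_iff_nhdsWithin_neBot.mp
    rw [closure_Ioo (by linarith : -q₀ ≠ q₀)]
    exact ⟨by linarith, le_refl _⟩
  have hgt : (2 : ℝ) / (3 * T) < p₀ * (1 + Real.exp (-2 * q₀) - q₀) := by
    have hpa : 0 < p₀ * (1 + Real.exp (-2 * q₀) - q₀) := by positivity
    rw [div_lt_iff₀ (by positivity)]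
    rw [mul_one_div, div_lt_iff₀ hpa] at hcon
    nlinarith
  have hev : ∀ᶠ x in nhdsWithin q₀ (Ioo (-q₀) q₀), 2 / (3 * T) < c x :=
    hlim.eventually_const_lt hgt
  obtain ⟨x, hx2, hx⟩ := (hev.and (eventually_mem_nhdsWithin)).exists
  have hcx : 0 < c x := lt_trans (by positivity) hx2
  -- apply the Riccati lemma to h t = g t x + p₀ q₀
  have key := riccati_blowup T (c x) hT hcx (fun t => g t x + p₀ * q₀)
    (((hdiff x hx).add_const _))
    (by show g 0 x + p₀ * q₀ = -c x; rw [h0 x hx]; simp only [hc]; ring)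
    (by
      intro t ht
      have hud : UniqueDiffWithinAt ℝ (Icc (0:ℝ) T) t := uniqueDiffOn_Icc hT t ht
      rw [derivWithin_add_const]
      exact hineq x hx t ht)
  -- contradiction: T < 2/(3 c x) but c x > 2/(3T)
  rw [lt_div_iff₀ (by positivity)] at key
  rw [div_lt_iff₀ (by positivity)] at hx2
  nlinarith
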